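/- Symmetrization of ρ_m gives the cycle-incidence matrix: let E be a finite set, σ a permutation of E, m : E → {0,1} with exactly one value 1 on each cycle of σ, and ρ_m := (I − ς_m)^{-1} where ς_m has (e',e)-entry 1 if e' = σ(e) and m(e) = 0 and 0 otherwise. Then ρ_m + ρ_mᵀ = I + C_σ, where C_σ is the E×E matrix whose (e,e')-entry is 1 if e and e' lie in the same cycle of σ and 0 otherwise. -/

import Mathlib

open Finset Matrix

variable {E : Type*}

/-- The "broken" permutation matrix `ς_m`: the matrix of the permutation `σ`
(with `(σ e, e)`-entry `1`) in which every column `e` with `m e = 1` is replaced by zero. -/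
def brokenPermMatrix [DecidableEq E] (σ : Equiv.Perm E) (m : E → ℤ) : Matrix E E ℤ :=
  Matrix.of fun e' e => if e' = σ e ∧ m e = 0 then 1 else 0

/-- The matrix `ρ_m = (I - ς_m)⁻¹`. -/
noncomputable def rhoMatrix [Fintype E] [DecidableEq E] (σ : Equiv.Perm E) (m : E → ℤ) :
    Matrix E E ℤ :=
  (1 - brokenPermMatrix σ m)⁻¹

section Aux

variable [Fintype E] [DecidableEq E]

/-- The permutation matrix of `σ`. -/
private def Pmat (σ : Equiv.Perm E) : Matrix E E ℤ :=
  Matrix.of fun e' e => if e' = σ e then 1 else 0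

/-- The cycle-incidence matrix of `σ`. -/
private def Cmat (σ : Equiv.Perm E) : Matrix E E ℤ :=
  Matrix.of fun e e' => if σ.SameCycle e e' then (1 : ℤ) else 0

private lemma Pmat_mul_transpose (σ : Equiv.Perm E) : Pmat σ * (Pmat σ)ᵀ = 1 := by
  ext a b
  simp only [Matrix.mul_apply, Pmat, Matrix.transpose_apply, Matrix.of_apply,
    Matrix.one_apply, ← Equiv.symm_apply_eq]
  simp [Finset.sum_ite_eq', Equiv.symm_apply_eq, eq_comm]

private lemma Pmat_mul_Cmat (σ : Equiv.Perm E) : Pmat σ * Cmat σ = Cmat σ := by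
  ext a b
  simp only [Matrix.mul_apply, Pmat, Cmat, Matrix.of_apply, ← Equiv.symm_apply_eq,
    ite_mul, one_mul, zero_mul]
  rw [Finset.sum_ite_eq]
  simp only [Finset.mem_univ, if_true]
  have : σ.SameCycle (σ.symm a) b ↔ σ.SameCycle a b := by
    rw [Equiv.Perm.sameCycle_symm_apply_left]
  simp [this]

private lemma Cmat_mul_Pmat_transpose (σ : Equiv.Perm E) : Cmat σ * (Pmat σ)ᵀ = Cmat σ := by
  ext a b
  simp only [Matrix.mul_apply, Pmat, Cmat, Matrix.of_apply, Matrix.transpose_apply,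
    ← Equiv.symm_apply_eq, mul_ite, mul_one, mul_zero]
  rw [Finset.sum_ite_eq]
  simp only [Finset.mem_univ, if_true]
  have : σ.SameCycle a (σ.symm b) ↔ σ.SameCycle a b := by
    rw [Equiv.Perm.sameCycle_symm_apply_right]
  simp [this]

private lemma broken_eq (σ : Equiv.Perm E) (m : E → ℤ) (hm01 : ∀ e, m e = 0 ∨ m e = 1) :
    brokenPermMatrix σ m = Pmat σ * (1 - Matrix.diagonal m) := by
  ext a b
  rw [Matrix.mul_sub, Matrix.mul_one, Matrix.sub_apply, Matrix.mul_diagonal]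
  rcases hm01 b with h | h
  · by_cases hab : a = σ b <;> simp [brokenPermMatrix, Pmat, h, hab]
  · by_cases hab : a = σ b <;> simp [brokenPermMatrix, Pmat, h, hab]

private lemma MCM (σ : Equiv.Perm E) (m : E → ℤ) (hm01 : ∀ e, m e = 0 ∨ m e = 1)
    (hm : ∀ e, ∃! e', σ.SameCycle e e' ∧ m e' = 1) :
    Matrix.diagonal m * (Cmat σ * Matrix.diagonal m) = Matrix.diagonal m := by
  ext a b
  rw [Matrix.diagonal_mul, Matrix.mul_diagonal]
  rcases hm01 a with ha | ha
  · rcases eq_or_ne a b with rfl | hab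
    · simp [ha]
    · simp [ha, Matrix.diagonal_apply_ne _ hab]
  · rcases hm01 b with hb | hb
    · have hab : a ≠ b := fun h => by rw [h, hb] at ha; exact one_ne_zero ha.symm
      simp [hb, Matrix.diagonal_apply_ne _ hab]
    · by_cases hc : σ.SameCycle a b
      · have : b = a := by
          obtain ⟨w, -, hw⟩ := hm a
          rw [hw b ⟨hc, hb⟩, hw a ⟨Equiv.Perm.SameCycle.refl σ a, ha⟩]
        subst this
        simp [Cmat, hc, ha, Matrix.diagonal_apply_eq]
      · have hab : a ≠ b := fun h => hc (h ▸ Equiv.Perm.SameCycle.refl σ a)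
        simp [Cmat, hc, Matrix.diagonal_apply_ne _ hab]

private lemma MM (m : E → ℤ) (hm01 : ∀ e, m e = 0 ∨ m e = 1) :
    (Matrix.diagonal m : Matrix E E ℤ) * Matrix.diagonal m = Matrix.diagonal m := by
  rw [Matrix.diagonal_mul_diagonal]
  ext i j
  rcases eq_or_ne i j with rfl | hij
  · rcases hm01 i with h | h <;> simp [Matrix.diagonal_apply_eq, h]
  · simp [Matrix.diagonal_apply_ne _ hij]

/-- The key algebraic identity `(1 - S)(1 + C)(1 - S)ᵀ = (1 - S) + (1 - S)ᵀ`. -/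
private lemma key_identity (σ : Equiv.Perm E) (m : E → ℤ)
    (hm01 : ∀ e, m e = 0 ∨ m e = 1)
    (hm : ∀ e, ∃! e', σ.SameCycle e e' ∧ m e' = 1) :
    (1 - brokenPermMatrix σ m) * (1 + Cmat σ) * (1 - brokenPermMatrix σ m)ᵀ =
      (1 - brokenPermMatrix σ m) + (1 - brokenPermMatrix σ m)ᵀ := by
  set P := Pmat σ with hP
  set C := Cmat σ with hC
  set M := (Matrix.diagonal m : Matrix E E ℤ) with hM
  have hS : brokenPermMatrix σ m = P * (1 - M) := broken_eq σ m hm01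
  have hMt : Mᵀ = M := Matrix.diagonal_transpose m
  have hT : (brokenPermMatrix σ m)ᵀ = (1 - M) * Pᵀ := by
    rw [hS, Matrix.transpose_mul, Matrix.transpose_sub, Matrix.transpose_one, hMt]
  have R1 : P * Pᵀ = 1 := Pmat_mul_transpose σ
  have R2 : P * C = C := Pmat_mul_Cmat σ
  have R3 : C * Pᵀ = C := Cmat_mul_Pmat_transpose σ
  have R4 : M * (C * M) = M := MCM σ m hm01 hm
  have R5 : M * M = M := MM m hm01
  have hT' : (1 - brokenPermMatrix σ m)ᵀ = 1 - (1 - M) * Pᵀ := by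
    rw [Matrix.transpose_sub, Matrix.transpose_one, hT]
  rw [hT', hS]
  -- Step A : (1 + C) * (1 - (1-M)Pᵀ) = (1 - (1-M)Pᵀ) + C * (M * Pᵀ)
  have hCΔPt : C * ((1 - M) * Pᵀ) = C - C * (M * Pᵀ) := by
    calc C * ((1 - M) * Pᵀ) = C * Pᵀ - C * (M * Pᵀ) := by noncomm_ring
      _ = C - C * (M * Pᵀ) := by rw [R3]
  have stepA : (1 + C) * (1 - (1 - M) * Pᵀ) = (1 - (1 - M) * Pᵀ) + C * (M * Pᵀ) := by
    calc (1 + C) * (1 - (1 - M) * Pᵀ)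
        = (1 - (1 - M) * Pᵀ) + (C - C * ((1 - M) * Pᵀ)) := by noncomm_ring
      _ = (1 - (1 - M) * Pᵀ) + (C - (C - C * (M * Pᵀ))) := by rw [hCΔPt]
      _ = (1 - (1 - M) * Pᵀ) + C * (M * Pᵀ) := by abel
  -- Step B : (1 - P(1-M)) * (C * (M * Pᵀ)) = P * (M * Pᵀ)
  have hΔCM : (1 - M) * (C * (M * Pᵀ)) = C * (M * Pᵀ) - M * Pᵀ := by
    calc (1 - M) * (C * (M * Pᵀ)) = C * (M * Pᵀ) - (M * (C * M)) * Pᵀ := by noncomm_ring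
      _ = C * (M * Pᵀ) - M * Pᵀ := by rw [R4]
  have stepB : (1 - P * (1 - M)) * (C * (M * Pᵀ)) = P * (M * Pᵀ) := by
    calc (1 - P * (1 - M)) * (C * (M * Pᵀ))
        = C * (M * Pᵀ) - P * ((1 - M) * (C * (M * Pᵀ))) := by noncomm_ring
      _ = C * (M * Pᵀ) - P * (C * (M * Pᵀ) - M * Pᵀ) := by rw [hΔCM]
      _ = C * (M * Pᵀ) - (P * C) * (M * Pᵀ) + P * (M * Pᵀ) := by noncomm_ring
      _ = P * (M * Pᵀ) := by rw [R2]; abel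
  -- Step C : (1 - P(1-M)) * (1 - (1-M)Pᵀ) = (1 - P(1-M)) + (1 - (1-M)Pᵀ) - P * (M * Pᵀ)
  have hΔΔ : (1 - M) * ((1 - M) * Pᵀ) = (1 - M) * Pᵀ := by
    calc (1 - M) * ((1 - M) * Pᵀ) = ((1 - M) * (1 - M)) * Pᵀ := by rw [Matrix.mul_assoc]
      _ = (1 - M - M + M * M) * Pᵀ := by noncomm_ring
      _ = (1 - M - M + M) * Pᵀ := by rw [R5]
      _ = (1 - M) * Pᵀ := by abel_nf
  have hPΔPt : P * ((1 - M) * Pᵀ) = 1 - P * (M * Pᵀ) := by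
    calc P * ((1 - M) * Pᵀ) = P * Pᵀ - P * (M * Pᵀ) := by noncomm_ring
      _ = 1 - P * (M * Pᵀ) := by rw [R1]
  have stepC : (1 - P * (1 - M)) * (1 - (1 - M) * Pᵀ) =
      (1 - P * (1 - M)) + (1 - (1 - M) * Pᵀ) - P * (M * Pᵀ) := by
    calc (1 - P * (1 - M)) * (1 - (1 - M) * Pᵀ)
        = 1 - P * (1 - M) - (1 - M) * Pᵀ + P * ((1 - M) * ((1 - M) * Pᵀ)) := by noncomm_ring
      _ = 1 - P * (1 - M) - (1 - M) * Pᵀ + P * ((1 - M) * Pᵀ) := by rw [hΔΔ]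
      _ = 1 - P * (1 - M) - (1 - M) * Pᵀ + (1 - P * (M * Pᵀ)) := by rw [hPΔPt]
      _ = (1 - P * (1 - M)) + (1 - (1 - M) * Pᵀ) - P * (M * Pᵀ) := by abel
  calc (1 - P * (1 - M)) * (1 + C) * (1 - (1 - M) * Pᵀ)
      = (1 - P * (1 - M)) * ((1 + C) * (1 - (1 - M) * Pᵀ)) := by rw [Matrix.mul_assoc]
    _ = (1 - P * (1 - M)) * ((1 - (1 - M) * Pᵀ) + C * (M * Pᵀ)) := by rw [stepA]
    _ = (1 - P * (1 - M)) * (1 - (1 - M) * Pᵀ) +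
          (1 - P * (1 - M)) * (C * (M * Pᵀ)) := by rw [Matrix.mul_add]
    _ = ((1 - P * (1 - M)) + (1 - (1 - M) * Pᵀ) - P * (M * Pᵀ)) + P * (M * Pᵀ) := by
          rw [stepB, stepC]
    _ = (1 - P * (1 - M)) + (1 - (1 - M) * Pᵀ) := by abel

private lemma pow_apply_eq_zero (σ : Equiv.Perm E) (m : E → ℤ) :
    ∀ k b, (∃ j < k, m ((σ ^ j) b) = 1) → ∀ a, (brokenPermMatrix σ m ^ k) a b = 0 := by
  intro k
  induction k with
  | zero => rintro b ⟨j, hj, -⟩ a; omega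
  | succ k ih =>
    rintro b ⟨j, hj, hjm⟩ a
    have hstep : (brokenPermMatrix σ m ^ (k + 1)) a b =
        if m b = 0 then (brokenPermMatrix σ m ^ k) a (σ b) else 0 := by
      rw [pow_succ, Matrix.mul_apply]
      by_cases h : m b = 0 <;>
        simp [brokenPermMatrix, h, Finset.sum_ite_eq', mul_ite, eq_comm]
    rw [hstep]
    by_cases h : m b = 0
    · rw [if_pos h]
      apply ih
      rcases Nat.eq_zero_or_pos j with rfl | hjpos
      · simp only [pow_zero, Equiv.Perm.coe_one, id_eq] at hjm
        rw [hjm] at h; exact absurd h one_ne_zero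
      · refine ⟨j - 1, by omega, ?_⟩
        have hj1 : j - 1 + 1 = j := by omega
        have : (σ ^ (j - 1)) (σ b) = (σ ^ j) b := by
          conv_rhs => rw [← hj1]
          rw [pow_succ, Equiv.Perm.mul_apply]
        rw [this]; exact hjm
    · rw [if_neg h]

private lemma broken_nilpotent (σ : Equiv.Perm E) (m : E → ℤ)
    (hm : ∀ e, ∃! e', σ.SameCycle e e' ∧ m e' = 1) :
    IsNilpotent (brokenPermMatrix σ m) := by
  refine ⟨orderOf σ, ?_⟩
  ext a b
  rw [Matrix.zero_apply]
  apply pow_apply_eq_zero σ m (orderOf σ) b _ a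
  obtain ⟨e', ⟨hc, h1⟩, -⟩ := hm b
  obtain ⟨i, hi, hpow⟩ := hc.exists_pow_eq'
  exact ⟨i, hi, by rw [hpow]; exact h1⟩

end Aux

/-- `ρ_m + ρ_mᵀ = I + C_σ`, where `C_σ` is the matrix whose `(e, e')`-entry is `1` if `e` and
`e'` lie in the same cycle of `σ` and `0` otherwise. -/
theorem rhoMatrix_add_transpose [Fintype E] [DecidableEq E]
    (σ : Equiv.Perm E) (m : E → ℤ)
    (hm01 : ∀ e, m e = 0 ∨ m e = 1)
    (hm : ∀ e, ∃! e', σ.SameCycle e e' ∧ m e' = 1) :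
    rhoMatrix σ m + (rhoMatrix σ m)ᵀ =
      1 + Matrix.of fun e e' : E => if σ.SameCycle e e' then (1 : ℤ) else 0 := by
  show (1 - brokenPermMatrix σ m)⁻¹ + ((1 - brokenPermMatrix σ m)⁻¹)ᵀ = 1 + Cmat σ
  set S := brokenPermMatrix σ m with hSdef
  set C := Cmat σ with hCdef
  have hunit : IsUnit (1 - S) := (broken_nilpotent σ m hm).isUnit_one_sub
  have hdet : IsUnit (1 - S).det := (Matrix.isUnit_iff_isUnit_det _).mp hunit
  have hdetT : IsUnit ((1 - S)ᵀ).det := by rw [Matrix.det_transpose]; exact hdet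
  have key : (1 - S) * (1 + C) * (1 - S)ᵀ = (1 - S) + (1 - S)ᵀ :=
    key_identity σ m hm01 hm
  have h2 : (1 - S)⁻¹ * ((1 - S) * (1 + C) * (1 - S)ᵀ * ((1 - S)ᵀ)⁻¹) = 1 + C := by
    rw [Matrix.mul_assoc ((1 - S) * (1 + C)), Matrix.mul_nonsing_inv _ hdetT,
      Matrix.mul_one, ← Matrix.mul_assoc, Matrix.nonsing_inv_mul _ hdet, Matrix.one_mul]
  have h3 : (1 - S)⁻¹ * (((1 - S) + (1 - S)ᵀ) * ((1 - S)ᵀ)⁻¹) =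
      ((1 - S)ᵀ)⁻¹ + (1 - S)⁻¹ := by
    rw [Matrix.add_mul, Matrix.mul_nonsing_inv _ hdetT, Matrix.mul_add, Matrix.mul_one,
      ← Matrix.mul_assoc, Matrix.nonsing_inv_mul _ hdet, Matrix.one_mul]
  rw [Matrix.transpose_nonsing_inv, ← h2, key, h3, add_comm]
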